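/- Let k ≥ 1, γ ∈ (−1,1), θ_γ = arccos γ, and let ρ̂_k be the kernel polynomial ρ̂_k(t) = (Σ_{j=0}^k T̂ⱼ(γ)T̂ⱼ(t)) / (Σ_{j=0}^k T̂ⱼ(γ)²). Then ∫₋₁¹ [ρ̂_k(s)]²/√(1−s²) ds = 1 / (Σ_{j=0}^k [T̂ⱼ(γ)]²) = (2π/(2k+1)) · 1/(1 + sin((2k+1)θ_γ)/((2k+1) sin θ_γ)). -/

import Mathlib

open Real Polynomial Finset

/-- Normalized Chebyshev polynomials of the first kind:
`T̂₀ = T₀/√π`, `T̂ⱼ = Tⱼ/√(π/2)` for `j ≥ 1`. -/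
noncomputable def ThatP (j : ℕ) : Polynomial ℝ :=
  if j = 0 then Polynomial.C (Real.sqrt Real.pi)⁻¹ * Polynomial.Chebyshev.T ℝ (j : ℤ)
  else Polynomial.C (Real.sqrt (Real.pi / 2))⁻¹ * Polynomial.Chebyshev.T ℝ (j : ℤ)

/-- The kernel polynomial `ρ̂_k(t) = (Σ_{j=0}^k T̂ⱼ(γ)T̂ⱼ(t)) / (Σ_{j=0}^k T̂ⱼ(γ)²)`. -/
noncomputable def rhoHat (k : ℕ) (γ : ℝ) : Polynomial ℝ :=
  Polynomial.C (∑ j ∈ Finset.range (k + 1), (ThatP j).eval γ ^ 2)⁻¹ *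
    ∑ j ∈ Finset.range (k + 1), Polynomial.C ((ThatP j).eval γ) * ThatP j

section Aux
open MeasureTheory intervalIntegral Set

lemma integrable_inv_sqrt : IntegrableOn (fun x : ℝ => 1 / Real.sqrt (1 - x ^ 2)) (Set.Ioo (-1 : ℝ) 1) := by
  have h := intervalIntegral.integrableOn_deriv_of_nonneg (g := Real.arcsin)
    (g' := fun x : ℝ => 1 / Real.sqrt (1 - x ^ 2)) (a := (-1:ℝ)) (b := 1)
    Real.continuous_arcsin.continuousOn
    (fun x hx => Real.hasDerivAt_arcsin (ne_of_gt hx.1) (ne_of_lt hx.2))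
    (fun x hx => by positivity)
  exact h.mono_set Set.Ioo_subset_Ioc_self

lemma poly_subst (p : Polynomial ℝ) :
    (∫ s in (-1:ℝ)..1, p.eval s / Real.sqrt (1 - s ^ 2)) = ∫ θ in (0:ℝ)..π, p.eval (Real.cos θ) := by
  obtain ⟨M, hM⟩ : ∃ M, ∀ x ∈ Set.Icc (-1:ℝ) 1, |p.eval x| ≤ M := by
    obtain ⟨M, hM⟩ := (isCompact_Icc (a := (-1:ℝ)) (b := 1)).exists_bound_of_continuousOn
      p.continuous_aeval.continuousOn
    exact ⟨M, by simpa using hM⟩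
  have hM0 : 0 ≤ M := le_trans (abs_nonneg _) (hM 0 (by norm_num))
  set g : ℝ → ℝ := fun s => p.eval s / Real.sqrt (1 - s ^ 2) with hg
  have gmeas : Measurable g := by
    exact (p.continuous_aeval.measurable).div
      (Real.continuous_sqrt.measurable.comp ((continuous_const.sub (continuous_pow 2)).measurable))
  have key : (∫ x in π..(0:ℝ), (g ∘ Real.cos) x * (-Real.sin x)) = ∫ u in (-1:ℝ)..1, g u := by
    have := intervalIntegral.integral_comp_mul_deriv''' (a := π) (b := 0)
      (f := Real.cos) (f' := fun x => -Real.sin x) (g := g)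
      Real.continuous_cos.continuousOn
      (fun x hx => (Real.hasDerivAt_cos x).hasDerivWithinAt)
      ?_ ?_ ?_
    · rwa [Real.cos_pi, Real.cos_zero] at this
    · -- continuity on cos '' Ioo
      have hsub : Real.cos '' Set.Ioo (min π 0) (max π 0) ⊆ Set.Ioo (-1:ℝ) 1 := by
        rintro _ ⟨θ, hθ, rfl⟩
        rw [min_eq_right Real.pi_pos.le, max_eq_left Real.pi_pos.le] at hθ
        constructor
        · have := Real.cos_lt_cos_of_nonneg_of_le_pi hθ.1.le le_rfl hθ.2
          simpa [Real.cos_pi] using this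
        · have := Real.cos_lt_cos_of_nonneg_of_le_pi le_rfl hθ.2.le hθ.1
          simpa [Real.cos_zero] using this
      refine ContinuousOn.mono ?_ hsub
      refine ContinuousOn.div p.continuous_aeval.continuousOn
        (Real.continuous_sqrt.comp (continuous_const.sub (continuous_pow 2))).continuousOn ?_
      intro x hx
      have : (0:ℝ) < 1 - x ^ 2 := by nlinarith [hx.1, hx.2]
      positivity
    · -- integrability on image
      have hsub : Real.cos '' Set.uIcc π 0 ⊆ Set.Icc (-1:ℝ) 1 := by
        rintro _ ⟨θ, _, rfl⟩
        exact ⟨Real.neg_one_le_cos θ, Real.cos_le_one θ⟩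
      refine MeasureTheory.IntegrableOn.mono_set ?_ hsub
      rw [integrableOn_Icc_iff_integrableOn_Ioo]
      refine MeasureTheory.Integrable.mono' (integrable_inv_sqrt.const_mul M)
        (gmeas.aestronglyMeasurable.restrict) ?_
      refine MeasureTheory.ae_restrict_of_forall_mem measurableSet_Ioo ?_
      intro x hx
      have h1 : (0:ℝ) < 1 - x ^ 2 := by nlinarith [hx.1, hx.2]
      have h2 : (0:ℝ) < Real.sqrt (1 - x ^ 2) := Real.sqrt_pos.mpr h1
      rw [hg, Real.norm_eq_abs, abs_div, abs_of_pos h2, mul_one_div]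
      gcongr
      exact hM x (Set.Ioo_subset_Icc_self hx)
    · -- integrability of the substituted integrand
      refine MeasureTheory.Integrable.mono' (g := fun _ => M)
        ((MeasureTheory.integrableOn_const_iff).mpr (Or.inr ?_))
        (((gmeas.comp Real.measurable_cos).mul Real.measurable_sin.neg).aestronglyMeasurable.restrict)
        (MeasureTheory.ae_restrict_of_forall_mem measurableSet_uIcc ?_)
      · exact (isCompact_uIcc).measure_lt_top
      · intro x _
        rcases eq_or_ne (Real.sin x) 0 with h0 | h0
        · simp [hg, Function.comp, h0, hM0]
        · have hsq : Real.sqrt (1 - Real.cos x ^ 2) = |Real.sin x| := by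
            rw [← Real.sin_sq_add_cos_sq x]; rw [add_sub_cancel_right, Real.sqrt_sq_eq_abs]
          have habs : |Real.sin x| ≠ 0 := abs_ne_zero.mpr h0
          rw [Real.norm_eq_abs, hg]
          simp only [Function.comp]
          rw [abs_mul, abs_div, hsq, abs_neg, abs_abs]
          rw [div_mul_eq_mul_div, mul_div_assoc, div_self habs, mul_one]
          exact hM _ ⟨Real.neg_one_le_cos x, Real.cos_le_one x⟩
  rw [hg] at key
  rw [← key, intervalIntegral.integral_symm]
  have hne : ∀ᵐ x : ℝ, x ≠ π := by
    rw [MeasureTheory.ae_iff]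
    simp only [ne_eq, not_not, Set.setOf_eq_eq_singleton]
    exact Real.volume_singleton
  have hcong : ∀ᵐ x : ℝ, x ∈ Set.uIoc (0:ℝ) π →
      ((fun s => p.eval s / Real.sqrt (1 - s ^ 2)) ∘ Real.cos) x * (-Real.sin x)
        = -(p.eval (Real.cos x)) := by
    filter_upwards [hne] with x hx hxI
    rw [Set.uIoc_of_le Real.pi_pos.le] at hxI
    have hsin : 0 < Real.sin x := Real.sin_pos_of_pos_of_lt_pi hxI.1 (lt_of_le_of_ne hxI.2 hx)
    have hsq : Real.sqrt (1 - Real.cos x ^ 2) = Real.sin x := by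
      rw [← Real.sin_sq_add_cos_sq x, add_sub_cancel_right, Real.sqrt_sq hsin.le]
    simp only [Function.comp, hsq]
    field_simp
  rw [intervalIntegral.integral_congr_ae hcong, intervalIntegral.integral_neg, neg_neg]

lemma int_cos_int (r : ℤ) (hr : r ≠ 0) : ∫ θ in (0:ℝ)..π, Real.cos (r * θ) = 0 := by
  have hr' : (r:ℝ) ≠ 0 := Int.cast_ne_zero.mpr hr
  rw [intervalIntegral.integral_comp_mul_left (fun x => Real.cos x) hr']
  simp [Real.sin_int_mul_pi]

lemma orth_cos (m n : ℕ) : (∫ θ in (0:ℝ)..π, Real.cos (m * θ) * Real.cos (n * θ))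
    = if m = n then (if m = 0 then π else π / 2) else 0 := by
  have prod : ∀ θ : ℝ, Real.cos (m * θ) * Real.cos (n * θ)
      = (Real.cos ((m - n : ℤ) * θ) + Real.cos ((m + n : ℤ) * θ)) / 2 := by
    intro θ
    push_cast
    rw [show ((m:ℝ) - n) * θ = m * θ - n * θ by ring, show ((m:ℝ) + n) * θ = m * θ + n * θ by ring,
      Real.cos_sub, Real.cos_add]
    ring
  simp only [prod]
  rw [intervalIntegral.integral_div, intervalIntegral.integral_add]
  rotate_left
  · exact (Real.continuous_cos.comp (continuous_const.mul continuous_id)).intervalIntegrable 0 π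
  · exact (Real.continuous_cos.comp (continuous_const.mul continuous_id)).intervalIntegrable 0 π
  rcases eq_or_ne m n with hmn | hmn
  · subst hmn
    rcases eq_or_ne m 0 with h0 | h0
    · subst h0; simp
    · have h1 : ((m:ℤ) - m) = 0 := by ring
      have h2 : ∫ θ in (0:ℝ)..π, Real.cos (((m:ℤ) - m : ℤ) * θ) = π := by
        simp [h1]
      rw [h2, int_cos_int _ (by positivity), if_pos rfl, if_neg h0]
      ring
  · have h1 : ((m:ℤ) - n) ≠ 0 := sub_ne_zero.mpr (by exact_mod_cast hmn)
    rw [int_cos_int _ h1]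
    have h2 : ((m:ℤ) + n) ≠ 0 := by omega
    rw [int_cos_int _ h2]
    simp [hmn]


lemma dirichlet_sum (k : ℕ) (θ : ℝ) (hs : Real.sin θ ≠ 0) :
    ∑ j ∈ Finset.range k, Real.cos (2 * ((j:ℝ) + 1) * θ)
      = (Real.sin ((2 * (k:ℝ) + 1) * θ) / Real.sin θ - 1) / 2 := by
  have tele := Finset.sum_range_sub (f := fun j : ℕ => Real.sin ((2 * (j:ℝ) + 1) * θ)) k
  have term : ∀ j : ℕ, Real.sin ((2 * ((j:ℝ) + 1) + 1) * θ) - Real.sin ((2 * (j:ℝ) + 1) * θ)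
      = 2 * Real.sin θ * Real.cos (2 * ((j:ℝ) + 1) * θ) := by
    intro j
    rw [Real.sin_sub_sin]
    have h1 : ((2 * ((j:ℝ) + 1) + 1) * θ - (2 * (j:ℝ) + 1) * θ) / 2 = θ := by ring
    have h2 : ((2 * ((j:ℝ) + 1) + 1) * θ + (2 * (j:ℝ) + 1) * θ) / 2 = 2 * ((j:ℝ) + 1) * θ := by
      ring
    rw [h1, h2]
  have key : 2 * Real.sin θ * ∑ j ∈ Finset.range k, Real.cos (2 * ((j:ℝ) + 1) * θ)
      = Real.sin ((2 * (k:ℝ) + 1) * θ) - Real.sin θ := by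
    rw [Finset.mul_sum]
    have := Finset.sum_congr rfl (fun j (_ : j ∈ Finset.range k) => (term j).symm)
    rw [this]
    convert tele using 2 with j
    · push_cast; ring_nf
    · norm_num
  rw [eq_div_iff two_ne_zero, eq_sub_iff_add_eq, eq_div_iff hs]
  linear_combination key

noncomputable def bC (j : ℕ) : ℝ := if j = 0 then (Real.sqrt π)⁻¹ else (Real.sqrt (π / 2))⁻¹

lemma ThatP_eval_cos (j : ℕ) (x : ℝ) :
    (ThatP j).eval (Real.cos x) = bC j * Real.cos (j * x) := by
  unfold ThatP bC
  split <;>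
  · simp only [Polynomial.eval_mul, Polynomial.eval_C]
    congr 1
    rw [Polynomial.Chebyshev.T_real_cos x (j:ℤ)]
    norm_num

lemma bC_sq (j : ℕ) : (bC j) ^ 2 * (if j = 0 then π else π / 2) = 1 := by
  unfold bC
  split
  · rw [sq, ← mul_inv, Real.mul_self_sqrt Real.pi_pos.le]
    exact inv_mul_cancel₀ Real.pi_ne_zero
  · rw [sq, ← mul_inv, Real.mul_self_sqrt (by positivity)]
    rw [inv_mul_cancel₀ (by positivity)]

lemma integral_sq_sum (k : ℕ) (d : ℕ → ℝ) :
    (∫ θ in (0:ℝ)..π, (∑ j ∈ Finset.range (k+1), d j * Real.cos (j * θ)) ^ 2)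
      = ∑ j ∈ Finset.range (k+1), (d j) ^ 2 * (if j = 0 then π else π / 2) := by
  have expand : ∀ θ : ℝ, (∑ j ∈ Finset.range (k+1), d j * Real.cos (j * θ)) ^ 2
      = ∑ i ∈ Finset.range (k+1), ∑ j ∈ Finset.range (k+1),
          (d i * d j) * (Real.cos (i * θ) * Real.cos (j * θ)) := by
    intro θ
    rw [sq, Finset.sum_mul_sum]
    exact Finset.sum_congr rfl fun i _ => Finset.sum_congr rfl fun j _ => by ring
  simp_rw [expand]
  rw [intervalIntegral.integral_finset_sum]
  swap
  · intro i _
    exact (continuous_finset_sum _ fun j _ => continuous_const.mul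
      ((Real.continuous_cos.comp (continuous_const.mul continuous_id)).mul
        (Real.continuous_cos.comp (continuous_const.mul continuous_id)))).intervalIntegrable 0 π
  have inner : ∀ i ∈ Finset.range (k+1),
      (∫ θ in (0:ℝ)..π, ∑ j ∈ Finset.range (k+1),
          (d i * d j) * (Real.cos (i * θ) * Real.cos (j * θ)))
        = (d i) ^ 2 * (if i = 0 then π else π / 2) := by
    intro i hi
    rw [intervalIntegral.integral_finset_sum]
    swap
    · intro j _
      exact (continuous_const.mul
        ((Real.continuous_cos.comp (continuous_const.mul continuous_id)).mul
          (Real.continuous_cos.comp (continuous_const.mul continuous_id)))).intervalIntegrable 0 π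
    have : ∀ j ∈ Finset.range (k+1),
        (∫ θ in (0:ℝ)..π, (d i * d j) * (Real.cos (i * θ) * Real.cos (j * θ)))
          = (d i * d j) * (if i = j then (if i = 0 then π else π / 2) else 0) := by
      intro j _
      rw [intervalIntegral.integral_const_mul, orth_cos]
    rw [Finset.sum_congr rfl this]
    simp_rw [mul_ite, mul_zero]
    rw [Finset.sum_ite_eq]
    simp only [hi, if_true]
    ring
  rw [Finset.sum_congr rfl inner]

end Aux

open MeasureTheory intervalIntegral Set in
/-- Theorem on the Chebyshev-weighted `L²` integral of the kernel polynomial: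
`∫₋₁¹ ρ̂_k(s)²/√(1−s²) ds = 1/(Σ_{j=0}^k T̂ⱼ(γ)²)
  = (2π/(2k+1)) · 1/(1 + sin((2k+1)θ_γ)/((2k+1) sin θ_γ))`. -/
theorem kernel_polynomial_weighted_norm (k : ℕ) (hk : 1 ≤ k) (γ : ℝ)
    (hγ : γ ∈ Set.Ioo (-1:ℝ) 1) (θγ : ℝ) (hθγ : θγ = Real.arccos γ) :
    (∫ s in (-1:ℝ)..1, (rhoHat k γ).eval s ^ 2 / Real.sqrt (1 - s ^ 2))
        = (∑ j ∈ Finset.range (k + 1), (ThatP j).eval γ ^ 2)⁻¹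
    ∧ (∫ s in (-1:ℝ)..1, (rhoHat k γ).eval s ^ 2 / Real.sqrt (1 - s ^ 2))
        = (2 * Real.pi / (2 * k + 1))
            * (1 + Real.sin ((2 * k + 1) * θγ) / ((2 * k + 1) * Real.sin θγ))⁻¹ := by
  obtain ⟨hγ1, hγ2⟩ := hγ
  set a := ∑ j ∈ Finset.range (k + 1), (ThatP j).eval γ ^ 2 with ha
  have hγcos : Real.cos θγ = γ := by rw [hθγ]; exact Real.cos_arccos hγ1.le hγ2.le
  have hsin : 0 < Real.sin θγ := by
    rw [hθγ, Real.sin_arccos]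
    have : (0:ℝ) < 1 - γ ^ 2 := by nlinarith
    positivity
  have hc : ∀ j : ℕ, (ThatP j).eval γ = bC j * Real.cos (j * θγ) := fun j => by
    rw [← hγcos, ThatP_eval_cos]
  -- a ≠ 0
  have hc0 : (ThatP 0).eval γ = (Real.sqrt π)⁻¹ := by
    rw [hc 0]; simp [bC]
  have hane : 0 < a := by
    have h1 : (0:ℝ) < (ThatP 0).eval γ ^ 2 := by
      rw [hc0]; positivity
    refine lt_of_lt_of_le h1 ?_
    exact Finset.single_le_sum (f := fun j => (ThatP j).eval γ ^ 2)
      (fun j _ => sq_nonneg _) (Finset.mem_range.mpr (Nat.succ_pos k))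
  -- first conjunct
  have h1 : (∫ s in (-1:ℝ)..1, (rhoHat k γ).eval s ^ 2 / Real.sqrt (1 - s ^ 2)) = a⁻¹ := by
    have hp : ∀ s : ℝ, (rhoHat k γ).eval s ^ 2 = ((rhoHat k γ) ^ 2).eval s := fun s => by
      rw [Polynomial.eval_pow]
    simp_rw [hp]
    rw [poly_subst]
    have hev : ∀ θ : ℝ, ((rhoHat k γ) ^ 2).eval (Real.cos θ)
        = (∑ j ∈ Finset.range (k + 1),
            (a⁻¹ * ((ThatP j).eval γ) * bC j) * Real.cos (j * θ)) ^ 2 := by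
      intro θ
      rw [Polynomial.eval_pow]
      congr 1
      rw [rhoHat]
      rw [Polynomial.eval_mul, Polynomial.eval_C, Polynomial.eval_finset_sum, Finset.mul_sum]
      refine Finset.sum_congr rfl fun j _ => ?_
      rw [Polynomial.eval_mul, Polynomial.eval_C, ThatP_eval_cos]
      ring
    simp_rw [hev]
    rw [integral_sq_sum]
    have hterm : ∀ j ∈ Finset.range (k + 1),
        (a⁻¹ * ((ThatP j).eval γ) * bC j) ^ 2 * (if j = 0 then π else π / 2)
          = a⁻¹ ^ 2 * ((ThatP j).eval γ) ^ 2 := by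
      intro j _
      have hb := bC_sq j
      calc (a⁻¹ * ((ThatP j).eval γ) * bC j) ^ 2 * (if j = 0 then π else π / 2)
          = a⁻¹ ^ 2 * ((ThatP j).eval γ) ^ 2 * (bC j ^ 2 * (if j = 0 then π else π / 2)) := by
            ring
        _ = a⁻¹ ^ 2 * ((ThatP j).eval γ) ^ 2 := by rw [hb, mul_one]
    rw [Finset.sum_congr rfl hterm, ← Finset.mul_sum, ← ha, sq, mul_assoc,
      inv_mul_cancel₀ hane.ne', mul_one]
  refine ⟨h1, ?_⟩
  rw [h1]
  -- compute a explicitly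
  have hk1 : (0:ℝ) < 2 * (k:ℝ) + 1 := by positivity
  have haval : a = (2 * (k:ℝ) + 1) / (2 * π)
      * (1 + Real.sin ((2 * (k:ℝ) + 1) * θγ) / ((2 * (k:ℝ) + 1) * Real.sin θγ)) := by
    have hsum : a = ∑ j ∈ Finset.range (k + 1), bC j ^ 2 * Real.cos ((j:ℝ) * θγ) ^ 2 := by
      rw [ha]
      exact Finset.sum_congr rfl fun j _ => by rw [hc j, mul_pow]
    rw [hsum, Finset.sum_range_succ']
    have hb0 : bC 0 ^ 2 = π⁻¹ := by
      simp [bC, sq, ← mul_inv, Real.mul_self_sqrt Real.pi_pos.le]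
    have hbj : ∀ j : ℕ, bC (j + 1) ^ 2 = 2 / π := by
      intro j
      simp only [bC, Nat.succ_ne_zero, if_false]
      rw [sq, ← mul_inv, Real.mul_self_sqrt (by positivity : (0:ℝ) ≤ π / 2)]
      rw [inv_div]
    have hcsq : ∀ j : ℕ, Real.cos (((j:ℝ) + 1) * θγ) ^ 2
        = 1 / 2 + Real.cos (2 * ((j:ℝ) + 1) * θγ) / 2 := by
      intro j
      rw [Real.cos_sq]
      congr 2
      ring
    have hmain : ∑ j ∈ Finset.range k, bC (j + 1) ^ 2 * Real.cos ((↑(j + 1):ℝ) * θγ) ^ 2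
        = (k:ℝ) / π + (Real.sin ((2 * (k:ℝ) + 1) * θγ) / Real.sin θγ - 1) / (2 * π) := by
      have : ∀ j ∈ Finset.range k, bC (j + 1) ^ 2 * Real.cos ((↑(j + 1):ℝ) * θγ) ^ 2
          = 1 / π + Real.cos (2 * ((j:ℝ) + 1) * θγ) / π := by
        intro j _
        rw [hbj j]
        push_cast
        rw [hcsq j]
        ring
      rw [Finset.sum_congr rfl this, Finset.sum_add_distrib, Finset.sum_const,
        Finset.card_range, nsmul_eq_mul]
      rw [← Finset.sum_div, dirichlet_sum k θγ hsin.ne']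
      ring
    rw [hmain]
    rw [Nat.cast_zero, zero_mul, Real.cos_zero, one_pow, mul_one, hb0]
    field_simp
    ring
  rw [haval, mul_inv, inv_div]
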